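/- Let μ be a real number with μ−1, μ, μ+1 all outside the set {−1/2, −3/2, −5/2, …} (equivalently μ ∉ {1/2, −1/2, −3/2, −5/2, …}). Then for every z > 0, s′_{μ+1,1/2}(z)·s_{μ,1/2}(z) − s_{μ+1,1/2}(z)·s′_{μ,1/2}(z) = (μ+1/2)·[s_{μ,1/2}(z)]² − (μ−1/2)·s_{μ−1,1/2}(z)·s_{μ+1,1/2}(z), where ′ denotes differentiation with respect to z. -/

import Mathlib

open Real

lemma poch_ne_zero {a : ℝ} (ha : ∀ k : ℕ, a + k ≠ 0) (n : ℕ) :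
    (ascPochhammer ℝ n).eval a ≠ 0 := by
  induction n with
  | zero => simp
  | succ m ih =>
      rw [ascPochhammer_succ_eval]
      exact mul_ne_zero ih (ha m)

lemma poch_pos {a : ℝ} (ha : ∀ k : ℕ, a + k ≠ 0) (n : ℕ) :
    0 < |(ascPochhammer ℝ n).eval a| :=
  abs_pos.mpr (poch_ne_zero ha n)

/-- master summable bound -/
lemma summable_master {a : ℝ} (ha : ∀ k : ℕ, a + k ≠ 0) {R : ℝ} (hR : 1 ≤ R) :
    Summable (fun n : ℕ => ((2*n+2 : ℝ)) * R^(2*n) / |(ascPochhammer ℝ (2*n)).eval a|) := by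
  set u : ℕ → ℝ := fun n => ((2*n+2 : ℝ)) * R^(2*n) / |(ascPochhammer ℝ (2*n)).eval a| with hu
  have hR0 : (0:ℝ) < R := lt_of_lt_of_le one_pos hR
  have hupos : ∀ n, 0 < u n := by
    intro n
    exact div_pos (by positivity) (poch_pos ha _)
  apply summable_of_ratio_norm_eventually_le (r := 1/2) (by norm_num)
  filter_upwards [Filter.eventually_ge_atTop (⌈|a| + 4*R^2 + 4⌉₊)] with n hn
  have hn' : |a| + 4*R^2 + 4 ≤ (n:ℝ) := le_trans (Nat.le_ceil _) (by exact_mod_cast hn)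
  have h1 : 2*R ≤ a + 2*n := by
    have := abs_le.mp (le_refl |a|) |>.1
    nlinarith [sq_nonneg (R-1)]
  have h2 : 2*R ≤ a + 2*n + 1 := by linarith
  have hP2 : (ascPochhammer ℝ (2*(n+1))).eval a
      = (ascPochhammer ℝ (2*n)).eval a * (a + 2*n) * (a + (2*n+1)) := by
    have : 2*(n+1) = (2*n+1)+1 := by ring
    rw [this, ascPochhammer_succ_eval, ascPochhammer_succ_eval]
    push_cast
    ring
  rw [Real.norm_eq_abs, Real.norm_eq_abs, abs_of_pos (hupos _), abs_of_pos (hupos _)]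
  simp only [hu]
  rw [hP2]
  rw [abs_mul, abs_mul]
  have hA : 2*R ≤ |a + 2*(n:ℝ)| := le_trans h1 (le_abs_self _)
  have hB : 2*R ≤ |a + (2*(n:ℝ)+1)| := by
    refine le_trans ?_ (le_abs_self _); linarith
  have hPp := poch_pos ha (2*n)
  have hApos : (0:ℝ) < |a + 2*(n:ℝ)| := lt_of_lt_of_le (by positivity) hA
  have hBpos : (0:ℝ) < |a + (2*(n:ℝ)+1)| := lt_of_lt_of_le (by positivity) hB
  rw [← mul_div_assoc, div_le_div_iff₀ (by positivity) (by positivity)]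
  have hpow : R^(2*(n+1)) = R^(2*n) * R^2 := by ring
  push_cast
  rw [hpow]
  have hRpow : 0 < R^(2*n) := by positivity
  have hAB : 4*R^2 ≤ |a + 2*(n:ℝ)| * |a + (2*(n:ℝ)+1)| := by
    nlinarith [mul_le_mul hA hB (by positivity) (abs_nonneg (a + 2*(n:ℝ)))]
  calc (2*((n:ℝ)+1)+2)*(R^(2*n)*R^2)*|Polynomial.eval a (ascPochhammer ℝ (2*n))|
      ≤ (2*(2*(n:ℝ)+2))*(R^(2*n)*R^2)*|Polynomial.eval a (ascPochhammer ℝ (2*n))| := by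
        have h0 : (0:ℝ) ≤ R^(2*n)*R^2*|Polynomial.eval a (ascPochhammer ℝ (2*n))| := by positivity
        nlinarith [h0]
    _ = 1/2*((2*(n:ℝ)+2)*R^(2*n))*(|Polynomial.eval a (ascPochhammer ℝ (2*n))| * (4*R^2)) := by
        ring
    _ ≤ 1/2*((2*(n:ℝ)+2)*R^(2*n))*(|Polynomial.eval a (ascPochhammer ℝ (2*n))| * |a + 2*(n:ℝ)| * |a + (2*(n:ℝ)+1)|) := by
        rw [mul_assoc (|Polynomial.eval a (ascPochhammer ℝ (2*n))|)]
        gcongr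

/-- `phi a z = Σ_{n≥0} (−1)^n z^(2n)/(a)_{2n}` where `(a)_m` is the Pochhammer symbol. -/
noncomputable def phi (a z : ℝ) : ℝ :=
  ∑' n : ℕ, (-1 : ℝ) ^ n * z ^ (2 * n) / (ascPochhammer ℝ (2 * n)).eval a

/-- termwise derivative series of `phi` -/
noncomputable def phiD (a z : ℝ) : ℝ :=
  ∑' n : ℕ, (-1 : ℝ) ^ n * (((2*n : ℕ) : ℝ) * z ^ (2*n - 1)) / (ascPochhammer ℝ (2*n)).eval a

lemma norm_term_le {a : ℝ} (ha : ∀ k : ℕ, a + k ≠ 0) {R : ℝ} (hR : 1 ≤ R) {y : ℝ}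
    (hy : |y| ≤ R) (n : ℕ) :
    ‖(-1 : ℝ) ^ n * y ^ (2 * n) / (ascPochhammer ℝ (2 * n)).eval a‖ ≤
      ((2*n+2 : ℝ)) * R^(2*n) / |(ascPochhammer ℝ (2*n)).eval a| := by
  rw [norm_div, norm_mul, norm_pow, norm_neg, norm_one, one_pow, one_mul,
    Real.norm_eq_abs, Real.norm_eq_abs]
  rw [div_le_div_iff_of_pos_right (poch_pos ha _)]
  calc |y ^ (2*n)| = |y| ^ (2*n) := abs_pow y (2*n)
    _ ≤ R ^ (2*n) := pow_le_pow_left₀ (abs_nonneg _) hy _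
    _ ≤ (2*(n:ℝ)+2) * R^(2*n) := by nlinarith [pow_pos (lt_of_lt_of_le one_pos hR) (2*n)]

lemma norm_termD_le {a : ℝ} (ha : ∀ k : ℕ, a + k ≠ 0) {R : ℝ} (hR : 1 ≤ R) {y : ℝ}
    (hy : |y| ≤ R) (n : ℕ) :
    ‖(-1 : ℝ) ^ n * (((2*n : ℕ) : ℝ) * y ^ (2*n - 1)) / (ascPochhammer ℝ (2*n)).eval a‖ ≤
      ((2*n+2 : ℝ)) * R^(2*n) / |(ascPochhammer ℝ (2*n)).eval a| := by
  rw [norm_div, norm_mul, norm_pow, norm_neg, norm_one, one_pow, one_mul,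
    Real.norm_eq_abs, Real.norm_eq_abs]
  rw [div_le_div_iff_of_pos_right (poch_pos ha _)]
  have hR0 : (0:ℝ) < R := lt_of_lt_of_le one_pos hR
  calc |((2*n : ℕ) : ℝ) * y ^ (2*n-1)| = ((2*n:ℕ):ℝ) * |y|^(2*n-1) := by
        rw [abs_mul, abs_pow, abs_of_nonneg (by positivity : (0:ℝ) ≤ ((2*n:ℕ):ℝ))]
    _ ≤ (2*(n:ℝ)+2) * R^(2*n-1) := by
        have h3 : ((2*n:ℕ):ℝ) ≤ 2*(n:ℝ)+2 := by push_cast; linarith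
        exact mul_le_mul h3 (pow_le_pow_left₀ (abs_nonneg _) hy _) (by positivity)
          (by positivity)
    _ ≤ (2*(n:ℝ)+2) * R^(2*n) := by
        have h4 : R^(2*n-1) ≤ R^(2*n) := pow_le_pow_right₀ hR (by omega)
        have h5 : (0:ℝ) ≤ 2*(n:ℝ)+2 := by positivity
        nlinarith [h4, h5]

lemma summable_phi {a : ℝ} (ha : ∀ k : ℕ, a + k ≠ 0) (z : ℝ) :
    Summable (fun n : ℕ => (-1 : ℝ) ^ n * z ^ (2 * n) / (ascPochhammer ℝ (2 * n)).eval a) := by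
  have hR : (1:ℝ) ≤ |z| + 1 := le_add_of_nonneg_left (abs_nonneg z)
  exact (summable_master ha hR).of_norm_bounded
    (fun n => norm_term_le ha hR (by linarith) n)

lemma summable_phiD {a : ℝ} (ha : ∀ k : ℕ, a + k ≠ 0) (z : ℝ) :
    Summable (fun n : ℕ =>
      (-1 : ℝ) ^ n * (((2*n : ℕ) : ℝ) * z ^ (2*n - 1)) / (ascPochhammer ℝ (2*n)).eval a) := by
  have hR : (1:ℝ) ≤ |z| + 1 := le_add_of_nonneg_left (abs_nonneg z)
  exact (summable_master ha hR).of_norm_bounded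
    (fun n => norm_termD_le ha hR (by linarith) n)

lemma phi_hasDerivAt {a : ℝ} (ha : ∀ k : ℕ, a + k ≠ 0) (z : ℝ) :
    HasDerivAt (phi a) (phiD a z) z := by
  set R := |z| + 1 with hRdef
  have hR : (1:ℝ) ≤ R := le_add_of_nonneg_left (abs_nonneg z)
  have hzR : z ∈ Metric.ball (0:ℝ) R := by
    simp only [Metric.mem_ball, dist_zero_right, Real.norm_eq_abs, hRdef]
    linarith
  unfold phi phiD
  refine hasDerivAt_tsum_of_isPreconnected
    (g := fun (n : ℕ) (y : ℝ) => (-1 : ℝ) ^ n * y ^ (2 * n) / (ascPochhammer ℝ (2 * n)).eval a)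
    (g' := fun (n : ℕ) (y : ℝ) =>
      (-1 : ℝ) ^ n * (((2*n : ℕ) : ℝ) * y ^ (2*n - 1)) / (ascPochhammer ℝ (2*n)).eval a)
    (summable_master ha hR) Metric.isOpen_ball
    ((convex_ball (0:ℝ) R).isPreconnected) (fun n y _ => ?_) (fun n y hy => ?_) hzR ?_ hzR
  · exact ((hasDerivAt_pow (2*n) y).const_mul ((-1:ℝ)^n)).div_const _
  · have hy' : |y| ≤ R := by
      simp only [Metric.mem_ball, dist_zero_right, Real.norm_eq_abs] at hy
      linarith
    exact norm_termD_le ha hR hy' n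
  · exact summable_phi ha z

lemma poch_succ_left_eval (b : ℝ) (m : ℕ) :
    (ascPochhammer ℝ (m+1)).eval b = b * (ascPochhammer ℝ m).eval (b+1) := by
  simp [ascPochhammer_succ_left, Polynomial.eval_comp]

lemma shift_ne {b : ℝ} (hb : ∀ k : ℕ, b + k ≠ 0) : ∀ k : ℕ, (b+1) + k ≠ 0 := by
  intro k h
  apply hb (k+1)
  push_cast
  linarith

lemma phi_rec {b : ℝ} (hb : ∀ k : ℕ, b + k ≠ 0) (z : ℝ) :
    b * phi b z = b * phi (b+1) z + z * phiD (b+1) z := by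
  have hb1 := shift_ne hb
  unfold phi phiD
  rw [← tsum_mul_left, ← tsum_mul_left, ← tsum_mul_left (a := z),
    ← Summable.tsum_add ((summable_phi hb1 z).mul_left b) ((summable_phiD hb1 z).mul_left z)]
  refine tsum_congr fun n => ?_
  have key : (ascPochhammer ℝ (2*n)).eval b * (b + 2*n)
      = b * (ascPochhammer ℝ (2*n)).eval (b+1) := by
    have h1 := ascPochhammer_succ_eval (2*n) b
    have h2 := poch_succ_left_eval b (2*n)
    rw [h1] at h2
    push_cast at h2 ⊢
    linarith
  have hPb := poch_ne_zero hb (2*n)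
  have hPb1 := poch_ne_zero hb1 (2*n)
  rcases Nat.eq_zero_or_pos n with hn | hn
  · subst hn; simp
  · have hzz : z * z^(2*n-1) = z^(2*n) := by
      rw [← pow_succ']
      congr 1
      omega
    have hterm : z * ((-1:ℝ)^n * (((2*n:ℕ):ℝ) * z^(2*n-1)) / (ascPochhammer ℝ (2*n)).eval (b+1))
        = (-1:ℝ)^n * (((2*n:ℕ):ℝ) * z^(2*n)) / (ascPochhammer ℝ (2*n)).eval (b+1) := by
      field_simp
      push_cast
      linear_combination hzz
    rw [hterm]
    field_simp
    push_cast
    linear_combination (-z^(2*n)) * key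

/-- Lommel function of the first kind `s_{ν,1/2}(z)`. -/
noncomputable def lommel (ν z : ℝ) : ℝ :=
  z ^ (ν + 1) / ((ν + 1 / 2) * (ν + 3 / 2)) * phi (ν + 5 / 2) z

lemma aux_id (z S A P c1 c2 : ℝ) (h1 : c1 ≠ 0) (h2 : c2 ≠ 0) (hz : z ≠ 0) (h3 : c1+2 ≠ 0) :
    c1 * (P/(c1*c2) * (A + z*S/(c1+2))) - P*z/(c2*(c1+2))*A/(2*z)
      = (c1+3/2)*P/(c2*(c1+2))*A + P*z/(c2*(c1+2))*S := by
  field_simp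
  ring

lemma lommel_hasDerivAt (ν : ℝ) (hν : ∀ k : ℕ, ν + 1/2 + k ≠ 0) {z : ℝ} (hz : 0 < z) :
    HasDerivAt (lommel (ν+1)) ((ν+1/2) * lommel ν z - lommel (ν+1) z / (2*z)) z := by
  have hb : ∀ k : ℕ, (ν+5/2) + (k:ℝ) ≠ 0 := by
    intro k h
    exact hν (k+2) (by push_cast; linarith)
  have ha : ∀ k : ℕ, (ν+1+5/2) + (k:ℝ) ≠ 0 := by
    intro k h
    exact hν (k+3) (by push_cast; linarith)
  have hhalf : ν + 1/2 ≠ 0 := by simpa using hν 0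
  have h32 : ν + 1 + 1/2 ≠ 0 := by
    intro h; exact hν 1 (by push_cast; linarith)
  have h52 : ν + 1 + 3/2 ≠ 0 := by
    intro h; exact hb 0 (by push_cast; linarith)
  have h52' : ν + 5/2 ≠ 0 := by simpa using hb 0
  have h1 : HasDerivAt (fun y : ℝ => y ^ (ν+1+1) / ((ν+1+1/2)*(ν+1+3/2)))
      ((ν+1+1) * z^(ν+1) / ((ν+1+1/2)*(ν+1+3/2))) z := by
    have h0 := (Real.hasDerivAt_rpow_const (x := z) (p := ν+1+1) (Or.inl hz.ne')).div_const
      ((ν+1+1/2)*(ν+1+3/2))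
    have he : ν+1+1-1 = ν+1 := by ring
    rw [he] at h0
    exact h0
  have h2 := phi_hasDerivAt ha z
  have hprod := h1.mul h2
  have hmain : HasDerivAt (lommel (ν+1))
      ((ν+1+1) * z^(ν+1) / ((ν+1+1/2)*(ν+1+3/2)) * phi (ν+1+5/2) z +
        z ^ (ν+1+1) / ((ν+1+1/2)*(ν+1+3/2)) * phiD (ν+1+5/2) z) z := hprod
  convert hmain using 1
  have hrec := phi_rec hb z
  have he2 : ν+5/2+1 = ν+1+5/2 := by ring
  rw [he2] at hrec
  unfold lommel
  rw [Real.rpow_add_one hz.ne' (ν+1)]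
  set ΦA := phi (ν+1+5/2) z with hΦA
  set S := phiD (ν+1+5/2) z with hS
  set Φb := phi (ν+5/2) z with hΦb
  set P := z ^ (ν+1) with hP
  have hΦ : Φb = ΦA + z * S / (ν+5/2) := by
    have hd : z * S / (ν+5/2) = Φb - ΦA := by
      rw [div_eq_iff h52']
      linear_combination -hrec
    rw [hd]
    ring
  have h32' : ν + 3/2 ≠ 0 := by
    intro h; exact hν 1 (by push_cast; linarith)
  have h52'' : ν + 1/2 + 2 ≠ 0 := by
    intro h; exact h52' (by linarith)
  rw [hΦ]
  linear_combination aux_id z S ΦA P (ν+1/2) (ν+3/2) hhalf h32' hz.ne' h52''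

theorem lommel_wronskian_identity (μ : ℝ) (hμ : μ ≠ 1/2)
    (hμ' : ∀ k : ℕ, μ ≠ -(1/2) - (k : ℝ)) (z : ℝ) (hz : 0 < z) :
    deriv (lommel (μ + 1)) z * lommel μ z - lommel (μ + 1) z * deriv (lommel μ) z =
      (μ + 1/2) * (lommel μ z) ^ 2 - (μ - 1/2) * lommel (μ - 1) z * lommel (μ + 1) z := by
  have hν1 : ∀ k : ℕ, μ + 1/2 + (k:ℝ) ≠ 0 := by
    intro k h
    exact hμ' k (by linarith)
  have hν2 : ∀ k : ℕ, (μ - 1) + 1/2 + (k:ℝ) ≠ 0 := by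
    intro k h
    rcases k with _ | j
    · exact hμ (by push_cast at h; linarith)
    · exact hμ' j (by push_cast at h ⊢; linarith)
  have hd1 := lommel_hasDerivAt μ hν1 hz
  have hd2 := lommel_hasDerivAt (μ - 1) hν2 hz
  have he : μ - 1 + 1 = μ := by ring
  rw [he] at hd2
  rw [hd1.deriv, hd2.deriv]
  ring
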